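/- Fix p_S ∈ [0, 1/2], let S := H(p_S), and set x := √(1 − (1 − 2p_S)²). Then the weights ω with ω₀ = ω₃ = (1 + x)/4 and ω₁ = ω₂ = (1 − x)/4 are nonnegative, sum to 1, satisfy S(ω) = S, and attain Q(ω) = 8(1 + x); moreover Q(ω') ≤ 8(1 + x) for every admissible weight vector ω' with S(ω') = S. (Equivalently, |ψ^o(S)⟩ = √((1+x)/4)(|00⟩+|11⟩) + √((1−x)/4)(|01⟩+|10⟩) is an optimal probe at fixed entanglement entropy S.) -/
import Mathlib


/-- Quantum Fisher information `Q(ω) = 16(ω₀+ω₃) − 16(ω₃−ω₀)²` of the two-qubit probe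
`|ψ⟩ = Σ_p √ω_p |p⟩` under the generator `h = σ_z⊗I + I⊗σ_z`. -/
noncomputable def QFI (ω : Fin 4 → ℝ) : ℝ :=
  16 * (ω 0 + ω 3) - 16 * (ω 3 - ω 0) ^ 2

/-- Generalized geometric measure of entanglement
`g(ω) = (1 − √(1 − 4(√(ω₁ω₂) − √(ω₀ω₃))²))/2`. -/
noncomputable def GGM (ω : Fin 4 → ℝ) : ℝ :=
  (1 - Real.sqrt (1 - 4 * (Real.sqrt (ω 1 * ω 2) - Real.sqrt (ω 0 * ω 3)) ^ 2)) / 2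

/-- Binary entropy `H(p) = −p log₂ p − (1−p) log₂ (1−p)` (with `0 log₂ 0 = 0`,
which holds automatically since `Real.logb 2 0 = 0`). -/
noncomputable def binEnt (p : ℝ) : ℝ :=
  -(p * Real.logb 2 p) - (1 - p) * Real.logb 2 (1 - p)

/-- Von Neumann entanglement entropy of the probe, `S(ω) = H(g(ω))`. -/
noncomputable def entEntropy (ω : Fin 4 → ℝ) : ℝ :=
  binEnt (GGM ω)

lemma binEnt_eq_binEntropy (p : ℝ) : binEnt p = Real.binEntropy p / Real.log 2 := by
  have hl : Real.log 2 ≠ 0 := ne_of_gt (Real.log_pos (by norm_num))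
  unfold binEnt Real.binEntropy Real.logb
  rw [Real.log_inv, Real.log_inv]
  field_simp
  ring

lemma binEnt_injOn {p q : ℝ} (hp : p ∈ Set.Icc (0:ℝ) 2⁻¹) (hq : q ∈ Set.Icc (0:ℝ) 2⁻¹)
    (h : binEnt p = binEnt q) : p = q := by
  have hl : Real.log 2 ≠ 0 := ne_of_gt (Real.log_pos (by norm_num))
  rw [binEnt_eq_binEntropy, binEnt_eq_binEntropy] at h
  have h' : Real.binEntropy p = Real.binEntropy q := by
    field_simp at h; exact h
  exact Real.binEntropy_strictMonoOn.injOn hp hq h'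

set_option maxHeartbeats 1000000 in
/-- For `p_S ∈ [0, 1/2]`, `S = H(p_S)` and `x = √(1 − (1 − 2p_S)²)`, the weights
`ω₀ = ω₃ = (1+x)/4`, `ω₁ = ω₂ = (1−x)/4` are admissible, have entanglement entropy `S`,
attain `Q(ω) = 8(1+x)`, and no admissible weight vector with entropy `S` does better. -/
theorem optimal_probe_fixed_entropy_two_qubits (pS S x : ℝ)
    (hpS : pS ∈ Set.Icc (0 : ℝ) (1 / 2)) (hS : S = binEnt pS)
    (hx : x = Real.sqrt (1 - (1 - 2 * pS) ^ 2)) (ω : Fin 4 → ℝ)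
    (hω : ω = ![(1 + x) / 4, (1 - x) / 4, (1 - x) / 4, (1 + x) / 4]) :
    (∀ p, 0 ≤ ω p) ∧ (∑ p, ω p) = 1 ∧ entEntropy ω = S ∧ QFI ω = 8 * (1 + x) ∧
      ∀ ω' : Fin 4 → ℝ, (∀ p, 0 ≤ ω' p) → (∑ p, ω' p) = 1 → entEntropy ω' = S →
        QFI ω' ≤ 8 * (1 + x) := by
  obtain ⟨hp0, hp2⟩ := hpS
  have harg0 : (0:ℝ) ≤ 1 - (1 - 2 * pS) ^ 2 := by nlinarith
  have hx0 : 0 ≤ x := hx ▸ Real.sqrt_nonneg _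
  have hx2 : x ^ 2 = 1 - (1 - 2 * pS) ^ 2 := by rw [hx, Real.sq_sqrt harg0]
  have hx1 : x ≤ 1 := by nlinarith
  have hsq : Real.sqrt (1 - x ^ 2) = 1 - 2 * pS := by
    have : 1 - x ^ 2 = (1 - 2 * pS) ^ 2 := by rw [hx2]; ring
    rw [this, Real.sqrt_sq (by linarith)]
  have hω0 : ω 0 = (1 + x) / 4 := by rw [hω]; rfl
  have hω1 : ω 1 = (1 - x) / 4 := by rw [hω]; rfl
  have hω2 : ω 2 = (1 - x) / 4 := by rw [hω]; rfl
  have hω3 : ω 3 = (1 + x) / 4 := by rw [hω]; rfl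
  have hGGM : GGM ω = pS := by
    unfold GGM
    rw [hω0, hω1, hω2, hω3, Real.sqrt_mul_self (by linarith : (0:ℝ) ≤ (1 - x) / 4),
      Real.sqrt_mul_self (by linarith : (0:ℝ) ≤ (1 + x) / 4)]
    rw [show 1 - 4 * ((1 - x) / 4 - (1 + x) / 4) ^ 2 = 1 - x ^ 2 by ring, hsq]
    ring
  refine ⟨?_, ?_, ?_, ?_, ?_⟩
  · intro p
    fin_cases p <;> simp [hω] <;> linarith
  · rw [hω, Fin.sum_univ_four]; simp; ring
  · rw [entEntropy, hGGM, hS]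
  · rw [QFI, hω0, hω3]; ring
  · intro ω' h0 h1 hent
    have hsum : ω' 0 + ω' 1 + ω' 2 + ω' 3 = 1 := by rw [← Fin.sum_univ_four ω', h1]
    set u := Real.sqrt (ω' 0 * ω' 3) with hu
    set s := Real.sqrt (ω' 1 * ω' 2) with hs
    have hu0 : 0 ≤ u := Real.sqrt_nonneg _
    have hs0 : 0 ≤ s := Real.sqrt_nonneg _
    have hule : u ≤ (ω' 0 + ω' 3) / 2 := by
      have h03 : ω' 0 * ω' 3 ≤ ((ω' 0 + ω' 3) / 2) ^ 2 := by nlinarith [sq_nonneg (ω' 0 - ω' 3)]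
      calc u ≤ Real.sqrt (((ω' 0 + ω' 3) / 2) ^ 2) := Real.sqrt_le_sqrt h03
        _ = (ω' 0 + ω' 3) / 2 := Real.sqrt_sq (by linarith [h0 0, h0 3])
    have hsle : s ≤ (ω' 1 + ω' 2) / 2 := by
      have h12 : ω' 1 * ω' 2 ≤ ((ω' 1 + ω' 2) / 2) ^ 2 := by nlinarith [sq_nonneg (ω' 1 - ω' 2)]
      calc s ≤ Real.sqrt (((ω' 1 + ω' 2) / 2) ^ 2) := Real.sqrt_le_sqrt h12
        _ = (ω' 1 + ω' 2) / 2 := Real.sqrt_sq (by linarith [h0 1, h0 2])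
    have ha1 : ω' 0 + ω' 3 ≤ 1 := by linarith [h0 1, h0 2]
    have hb1 : ω' 1 + ω' 2 ≤ 1 := by linarith [h0 0, h0 3]
    have hs12 : s ≤ 1 / 2 := by linarith
    have hu12 : u ≤ 1 / 2 := by linarith
    have ht1 : 1 - 4 * (s - u) ^ 2 ≤ 1 := by nlinarith [sq_nonneg (s - u)]
    have ht0 : 0 ≤ 1 - 4 * (s - u) ^ 2 := by
      nlinarith [mul_nonneg (by linarith : (0:ℝ) ≤ 1 / 2 - (s - u))
        (by linarith : (0:ℝ) ≤ 1 / 2 + (s - u))]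
    have hg : GGM ω' = (1 - Real.sqrt (1 - 4 * (s - u) ^ 2)) / 2 := by
      unfold GGM
      rw [← hs, ← hu]
    have hroot0 : 0 ≤ Real.sqrt (1 - 4 * (s - u) ^ 2) := Real.sqrt_nonneg _
    have hroot1 : Real.sqrt (1 - 4 * (s - u) ^ 2) ≤ 1 := Real.sqrt_le_one.mpr ht1
    have hgmem : GGM ω' ∈ Set.Icc (0:ℝ) 2⁻¹ := by
      rw [hg]; constructor <;> [linarith; linarith]
    have hgeq : GGM ω' = pS :=
      binEnt_injOn hgmem ⟨hp0, by linarith⟩ (hent.trans hS)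
    have hroot : Real.sqrt (1 - 4 * (s - u) ^ 2) = 1 - 2 * pS := by
      rw [hg] at hgeq; linarith
    have ht2 : 4 * (s - u) ^ 2 = x ^ 2 := by
      have h' := Real.sq_sqrt ht0
      rw [hroot] at h'
      nlinarith [h', hx2]
    have habs : |s - u| = x / 2 := by
      rw [← Real.sqrt_sq_eq_abs, show (s - u) ^ 2 = (x / 2) ^ 2 by nlinarith [ht2],
        Real.sqrt_sq (by linarith)]
    have hux : u ≤ s + x / 2 := by
      have h1' := le_abs_self (u - s)
      have h2' := abs_sub_comm u s
      rw [h2', habs] at h1'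
      linarith
    rw [QFI]
    have hu2 : u ^ 2 = ω' 0 * ω' 3 := Real.sq_sqrt (mul_nonneg (h0 0) (h0 3))
    have hd : (ω' 3 - ω' 0) ^ 2 = (ω' 0 + ω' 3) ^ 2 - 4 * u ^ 2 := by rw [hu2]; ring
    rw [hd]
    set a := ω' 0 + ω' 3 with haa
    have ha0 : 0 ≤ a := by have := h0 0; have := h0 3; positivity
    have husx : u ≤ (1 - a + x) / 2 := by
      have hsa : s ≤ (1 - a) / 2 := by rw [haa]; linarith
      linarith
    clear_value u s a
    rcases le_or_gt a ((1 + x) / 2) with hc | hc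
    · have hq : 4 * u ^ 2 ≤ a ^ 2 := by
        nlinarith only [mul_self_le_mul_self hu0 (by linarith only [hule] : u ≤ a / 2)]
      linarith only [hq, hc]
    · have hq2 : 4 * u ^ 2 ≤ (1 - a + x) ^ 2 := by
        nlinarith only [mul_self_le_mul_self hu0 husx]
      have hprod : (1 + x) / 2 * (1 + 2 * x) ≤ a * (1 + 2 * x) :=
        mul_le_mul_of_nonneg_right hc.le (by linarith only [hx0])
      linarith only [hq2, hprod]
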